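/- Let n ≥ 3 be an odd integer, let m ∈ ℤ be coprime to n, and let ℓ := φ(n)/2, where φ denotes Euler's totient function. Then for all integers k ≥ 0, d_ℤ(m/n) = d_ℤ(2^{kℓ}·(m/n)). Consequently, the sequence (d_ℤ(2^k·(m/n)))_{k≥0} is ℓ-periodic: d_ℤ(2^{k+ℓ}·(m/n)) = d_ℤ(2^k·(m/n)) for all k ≥ 0. -/

import Mathlib

noncomputable section

/-- The distance of a real number to the set of integers. -/
noncomputable def dZ (x : ℝ) : ℝ := ⨅ k : ℤ, |x - (k : ℝ)|

lemma dZ_add_int (x : ℝ) (c : ℤ) : dZ (x + c) = dZ x := by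
  have hs : Function.Surjective (fun k : ℤ => k + c) := fun k => ⟨k - c, by ring⟩
  calc dZ (x + c) = ⨅ k : ℤ, |x + c - ((k + c : ℤ) : ℝ)| :=
        (hs.iInf_comp fun j : ℤ => |x + c - (j : ℝ)|).symm
    _ = ⨅ k : ℤ, |x - (k : ℝ)| := by
        refine iInf_congr fun k => ?_
        rw [show x + c - ((k + c : ℤ) : ℝ) = x - (k : ℝ) by push_cast; ring]
    _ = dZ x := rfl

lemma dZ_neg (x : ℝ) : dZ (-x) = dZ x := by
  have hs : Function.Surjective (fun k : ℤ => -k) := fun k => ⟨-k, by ring⟩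
  calc dZ (-x) = ⨅ k : ℤ, |(-x) - ((-k : ℤ) : ℝ)| :=
        (hs.iInf_comp fun j : ℤ => |(-x) - (j : ℝ)|).symm
    _ = ⨅ k : ℤ, |x - (k : ℝ)| := by
        refine iInf_congr fun k => ?_
        rw [show (-x) - ((-k : ℤ) : ℝ) = -(x - (k : ℝ)) by push_cast; ring, abs_neg]
    _ = dZ x := rfl

/-- If `a ≡ b` or `a ≡ -b` mod `n`, then `a/n` and `b/n` have the same distance to ℤ. -/
lemma dZ_int_div (n : ℕ) (hn : 0 < n) (a b : ℤ)
    (h : (n : ℤ) ∣ a - b ∨ (n : ℤ) ∣ a + b) :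
    dZ ((a : ℝ) / n) = dZ ((b : ℝ) / n) := by
  have hn' : (n : ℝ) ≠ 0 := Nat.cast_ne_zero.mpr hn.ne'
  rcases h with ⟨t, ht⟩ | ⟨t, ht⟩
  · have : (a : ℝ) / n = (b : ℝ) / n + (t : ℤ) := by
      have ha : a = b + n * t := by linarith
      rw [ha]; push_cast; field_simp
    rw [this, dZ_add_int]
  · have : (a : ℝ) / n = -((b : ℝ) / n) + (t : ℤ) := by
      have ha : a = -b + n * t := by linarith
      rw [ha]; push_cast; field_simp
    rw [this, dZ_add_int, dZ_neg]

lemma odd_of_dvd {n d : ℕ} (h : Odd n) (hd : d ∣ n) : Odd d := by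
  rw [← Nat.not_even_iff_odd] at h ⊢
  intro he
  exact h ((even_iff_two_dvd.mpr ((even_iff_two_dvd.mp he).trans hd)))

/-- For an odd prime power `p^k`, a square root of 1 mod `p^k` is `±1`. -/
lemma sqrt_one_prime_pow (p : ℕ) (hp : p.Prime) (hodd : Odd p) (k : ℕ) (a : ℤ)
    (h : ((p : ℤ) ^ k) ∣ a ^ 2 - 1) :
    ((p : ℤ) ^ k) ∣ a - 1 ∨ ((p : ℤ) ^ k) ∣ a + 1 := by
  have hp' : Prime (p : ℤ) := Nat.prime_iff_prime_int.mp hp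
  rw [show a ^ 2 - 1 = (a - 1) * (a + 1) by ring] at h
  by_cases hd : (p : ℤ) ∣ a + 1
  · right
    have hnd : ¬ (p : ℤ) ∣ a - 1 := by
      intro hd'
      have h2 : (p : ℤ) ∣ 2 := by
        have := dvd_sub hd hd'
        simpa using this
      have h2' : p ∣ 2 := by exact_mod_cast h2
      have := Nat.le_of_dvd two_pos h2'
      obtain ⟨j, hj⟩ := hodd
      have := hp.two_le
      omega
    have hcop : IsCoprime ((p : ℤ) ^ k) (a - 1) :=
      ((hp'.coprime_iff_not_dvd).mpr hnd).pow_left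
    exact hcop.dvd_of_dvd_mul_left h
  · left
    have hcop : IsCoprime ((p : ℤ) ^ k) (a + 1) :=
      ((hp'.coprime_iff_not_dvd).mpr hd).pow_left
    exact hcop.dvd_of_dvd_mul_right h

/-- Euler's theorem in divisibility form. -/
lemma euler_dvd (d L : ℕ) (hd : Odd d) (hL : Nat.totient d ∣ L) :
    (d : ℤ) ∣ 2 ^ L - 1 := by
  have hco : Nat.Coprime 2 d := Nat.coprime_two_left.mpr hd
  obtain ⟨c, hc⟩ := hL
  have h1 : 2 ^ Nat.totient d ≡ 1 [MOD d] := Nat.ModEq.pow_totient hco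
  have h2 : 2 ^ L ≡ 1 [MOD d] := by
    have := h1.pow c
    rwa [← pow_mul, one_pow, ← hc] at this
  have h3 : (d : ℤ) ∣ ((1 : ℕ) : ℤ) - ((2 ^ L : ℕ) : ℤ) := (Nat.modEq_iff_dvd).mp h2
  have h4 : (d : ℤ) ∣ -(((1 : ℕ) : ℤ) - ((2 ^ L : ℕ) : ℤ)) := (dvd_neg).mpr h3
  convert h4 using 1
  push_cast
  ring

/-- The key number-theoretic fact: `2^(φ(n)/2) ≡ ±1 (mod n)` for odd `n ≥ 3`. -/
lemma two_pow_half_totient (n : ℕ) (hn : 3 ≤ n) (hodd : Odd n) :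
    (n : ℤ) ∣ 2 ^ (Nat.totient n / 2) - 1 ∨ (n : ℤ) ∣ 2 ^ (Nat.totient n / 2) + 1 := by
  set L := Nat.totient n / 2 with hL
  obtain ⟨e, he⟩ : Even (Nat.totient n) := Nat.totient_even (by omega)
  have h2L : 2 * L = Nat.totient n := by omega
  set p := n.minFac with hp_def
  have hp : p.Prime := Nat.minFac_prime (by omega)
  have hpn : p ∣ n := Nat.minFac_dvd n
  have hpodd : Odd p := odd_of_dvd hodd hpn
  set k := n.factorization p with hk_def
  have hk1 : 0 < k := hp.factorization_pos_of_dvd (by omega) hpn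
  set a := p ^ k with ha_def
  set b := ordCompl[p] n with hb_def
  have hab : a * b = n := Nat.ordProj_mul_ordCompl_eq_self n p
  have hcop : Nat.Coprime a b := Nat.Coprime.pow_left k (Nat.coprime_ordCompl hp (by omega))
  have haodd : Odd a := odd_of_dvd hodd (Dvd.intro b hab)
  have hbodd : Odd b := odd_of_dvd hodd (Dvd.intro_left a hab)
  have hp3 : 3 ≤ p := by
    obtain ⟨j, hj⟩ := hpodd
    have := hp.two_le
    omega
  have ha3 : 3 ≤ a := le_trans hp3 (Nat.le_self_pow hk1.ne' p)
  by_cases hb1 : b = 1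
  · -- prime power case
    have hna : n = a := by rw [← hab, hb1, mul_one]
    have hdvd : ((p : ℤ) ^ k) ∣ ((2 : ℤ) ^ L) ^ 2 - 1 := by
      have h := euler_dvd n (2 * L) hodd (by rw [h2L])
      rw [hna] at h
      have hcast : ((a : ℕ) : ℤ) = (p : ℤ) ^ k := by rw [ha_def]; push_cast; ring
      rw [hcast] at h
      rw [← pow_mul, mul_comm L 2]
      exact h
    have hcast : (n : ℤ) = (p : ℤ) ^ k := by rw [hna, ha_def]; push_cast; ring
    rcases sqrt_one_prime_pow p hp hpodd k (2 ^ L) hdvd with h | h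
    · left; rwa [hcast]
    · right; rwa [hcast]
  · -- two coprime factors case
    have hb0 : b ≠ 0 := by intro h0; rw [h0, mul_zero] at hab; omega
    have hb3 : 3 ≤ b := by
      obtain ⟨j, hj⟩ := hbodd
      omega
    have hφmul : Nat.totient n = Nat.totient a * Nat.totient b := by
      rw [← hab, Nat.totient_mul hcop]
    obtain ⟨ca, hca⟩ : Even (Nat.totient a) := Nat.totient_even (by omega)
    obtain ⟨cb, hcb⟩ : Even (Nat.totient b) := Nat.totient_even (by omega)
    have hXa : L = Nat.totient a * cb := by
      have h' : Nat.totient n = 2 * (Nat.totient a * cb) := by rw [hφmul, hcb]; ring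
      omega
    have hXb : L = Nat.totient b * ca := by
      have h' : Nat.totient n = 2 * (Nat.totient b * ca) := by rw [hφmul, hca]; ring
      omega
    have h1 : (a : ℤ) ∣ 2 ^ L - 1 := euler_dvd a L haodd ⟨cb, hXa⟩
    have h2 : (b : ℤ) ∣ 2 ^ L - 1 := euler_dvd b L hbodd ⟨ca, hXb⟩
    left
    have hcop' : IsCoprime (a : ℤ) (b : ℤ) := Nat.isCoprime_iff_coprime.mpr hcop
    have hmul := hcop'.mul_dvd h1 h2
    have : ((a : ℤ) * (b : ℤ)) = (n : ℤ) := by exact_mod_cast congrArg (Nat.cast : ℕ → ℤ) hab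
    rwa [this] at hmul

/-- for odd `n ≥ 3`, `m` coprime to `n` and `ℓ = φ(n)/2`, one has
`d_ℤ(m/n) = d_ℤ(2^{kℓ} m/n)` for all `k ≥ 0`; consequently the sequence
`(d_ℤ(2^k m/n))_{k ≥ 0}` is `ℓ`-periodic. -/
theorem stmt9 (n : ℕ) (hn : 3 ≤ n) (hodd : Odd n) (m : ℤ) (hco : IsCoprime m (n : ℤ)) :
    (∀ k : ℕ, dZ ((m : ℝ) / (n : ℝ)) =
      dZ (2 ^ (k * (Nat.totient n / 2)) * ((m : ℝ) / (n : ℝ)))) ∧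
    (∀ k : ℕ, dZ (2 ^ (k + Nat.totient n / 2) * ((m : ℝ) / (n : ℝ))) =
      dZ (2 ^ k * ((m : ℝ) / (n : ℝ)))) := by
  set L := Nat.totient n / 2 with hL
  have key := two_pow_half_totient n hn hodd
  have hn0 : 0 < n := by omega
  -- a power version of key
  have keyk : ∀ k : ℕ, (n : ℤ) ∣ 2 ^ (k * L) - 1 ∨ (n : ℤ) ∣ 2 ^ (k * L) + 1 := by
    intro k
    have hpow : (2 : ℤ) ^ (k * L) = ((2 : ℤ) ^ L) ^ k := by rw [← pow_mul, mul_comm]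
    rcases key with h | h
    · left
      have : ((2 : ℤ) ^ L - 1) ∣ ((2 : ℤ) ^ L) ^ k - 1 ^ k := sub_dvd_pow_sub_pow _ _ _
      rw [one_pow, ← hpow] at this
      exact h.trans this
    · have hmod : (-1 : ℤ) ≡ 2 ^ L [ZMOD (n : ℕ)] :=
        Int.modEq_iff_dvd.mpr (by simpa [sub_neg_eq_add] using h)
      have hmodk : ((-1 : ℤ)) ^ k ≡ ((2 : ℤ) ^ L) ^ k [ZMOD (n : ℕ)] := hmod.pow k
      rw [← hpow] at hmodk
      rcases Nat.even_or_odd k with hk | hk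
      · left
        rw [hk.neg_one_pow] at hmodk
        simpa using Int.modEq_iff_dvd.mp hmodk
      · right
        rw [hk.neg_one_pow] at hmodk
        simpa [sub_neg_eq_add] using Int.modEq_iff_dvd.mp hmodk
  constructor
  · intro k
    have hrw : (2 : ℝ) ^ (k * L) * ((m : ℝ) / n) = (((2 ^ (k * L) * m : ℤ) : ℝ)) / n := by
      push_cast; ring
    rw [hrw]
    refine (dZ_int_div n hn0 (2 ^ (k * L) * m) m ?_).symm
    rcases keyk k with h | h
    · left
      have : (n : ℤ) ∣ (2 ^ (k * L) - 1) * m := h.mul_right m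
      convert this using 1; ring
    · right
      have : (n : ℤ) ∣ (2 ^ (k * L) + 1) * m := h.mul_right m
      convert this using 1; ring
  · intro k
    have hrw1 : (2 : ℝ) ^ (k + L) * ((m : ℝ) / n) = (((2 ^ (k + L) * m : ℤ) : ℝ)) / n := by
      push_cast; ring
    have hrw2 : (2 : ℝ) ^ k * ((m : ℝ) / n) = (((2 ^ k * m : ℤ) : ℝ)) / n := by
      push_cast; ring
    rw [hrw1, hrw2]
    refine dZ_int_div n hn0 (2 ^ (k + L) * m) (2 ^ k * m) ?_
    rcases key with h | h
    · left
      have : (n : ℤ) ∣ (2 ^ L - 1) * (2 ^ k * m) := h.mul_right (2 ^ k * m)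
      convert this using 1; rw [pow_add]; ring
    · right
      have : (n : ℤ) ∣ (2 ^ L + 1) * (2 ^ k * m) := h.mul_right (2 ^ k * m)
      convert this using 1; rw [pow_add]; ring
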